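/- Let n be a positive integer, H : ℝⁿ → ℝ continuously differentiable, J an n × n real skew-symmetric matrix, and τ a real number. If Y, Ŷ ∈ ℝⁿ satisfy the averaged vector field (AVF) method Ŷ − Y = τ · J · (∫₀¹ ∇H(θŶ + (1−θ)Y) dθ), then the AVF method conserves the energy: H(Ŷ) = H(Y). -/

import Mathlib

open Matrix

/-- Energy conservation of the averaged vector field (AVF) method: if
`Ŷ − Y = τ J ∫₀¹ ∇H(θŶ + (1−θ)Y) dθ` with `J` skew-symmetric, then `H(Ŷ) = H(Y)`. -/
theorem avf_energy_conservation (n : ℕ) (hn : 0 < n)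
    (H : (Fin n → ℝ) → ℝ) (hH : ContDiff ℝ 1 H)
    (J : Matrix (Fin n) (Fin n) ℝ) (hJ : J.transpose = -J)
    (τ : ℝ) (Y Yh : Fin n → ℝ)
    (hstep : Yh - Y = τ • J.mulVec
      (fun j => ∫ θ in (0:ℝ)..1, fderiv ℝ H (θ • Yh + (1 - θ) • Y) (Pi.single j 1))) :
    H Yh = H Y := by
  set γ : ℝ → (Fin n → ℝ) := fun θ => θ • Yh + (1 - θ) • Y with hγdef
  set g : Fin n → ℝ := fun j => ∫ θ in (0:ℝ)..1, fderiv ℝ H (γ θ) (Pi.single j 1) with hg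
  have hdiff : Differentiable ℝ H := hH.differentiable one_ne_zero
  have hγcont : Continuous γ := by continuity
  have hγderiv : ∀ θ : ℝ, HasDerivAt γ (Yh - Y) θ := by
    intro θ
    have h1 : HasDerivAt (fun θ : ℝ => θ • Yh) Yh θ := by
      simpa using (hasDerivAt_id θ).smul_const Yh
    have h2 : HasDerivAt (fun θ : ℝ => (1 - θ) • Y) (-Y) θ := by
      have : HasDerivAt (fun θ : ℝ => (1 - θ)) (-1) θ := by
        simpa [Pi.sub_def] using (hasDerivAt_const θ (1:ℝ)).sub (hasDerivAt_id θ)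
      simpa using this.smul_const Y
    simpa [sub_eq_add_neg, Pi.add_def, hγdef] using h1.add h2
  have hcomp : ∀ θ : ℝ, HasDerivAt (fun t => H (γ t))
      (fderiv ℝ H (γ θ) (Yh - Y)) θ := fun θ =>
    (hdiff (γ θ)).hasFDerivAt.comp_hasDerivAt θ (hγderiv θ)
  have hfcont : Continuous fun θ => fderiv ℝ H (γ θ) :=
    (hH.continuous_fderiv one_ne_zero).comp hγcont
  have hcontv : ∀ v : Fin n → ℝ, Continuous fun θ => fderiv ℝ H (γ θ) v := fun v =>
    (ContinuousLinearMap.apply ℝ ℝ v).continuous.comp hfcont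
  have hftc : H (γ 1) - H (γ 0) = ∫ θ in (0:ℝ)..1, fderiv ℝ H (γ θ) (Yh - Y) :=
    (intervalIntegral.integral_eq_sub_of_hasDerivAt (fun θ _ => hcomp θ)
      ((hcontv (Yh - Y)).intervalIntegrable 0 1)).symm
  have hexp : ∀ θ : ℝ, fderiv ℝ H (γ θ) (Yh - Y)
      = ∑ j, (Yh - Y) j * fderiv ℝ H (γ θ) (Pi.single j 1) := by
    intro θ
    have := LinearMap.pi_apply_eq_sum_univ
      ((fderiv ℝ H (γ θ)) : (Fin n → ℝ) →ₗ[ℝ] ℝ) (Yh - Y)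
    simp only [ContinuousLinearMap.coe_coe, smul_eq_mul] at this
    rw [this]
    refine Finset.sum_congr rfl fun j _ => ?_
    congr 1
    congr 1
    funext i
    simp [Pi.single_apply, eq_comm]
  have hint : (∫ θ in (0:ℝ)..1, fderiv ℝ H (γ θ) (Yh - Y))
      = ∑ j, (Yh - Y) j * g j := by
    rw [intervalIntegral.integral_congr (fun θ _ => hexp θ)]
    rw [intervalIntegral.integral_finset_sum]
    · exact Finset.sum_congr rfl fun j _ => intervalIntegral.integral_const_mul _ _
    · intro j _
      exact (continuous_const.mul (hcontv (Pi.single j 1))).intervalIntegrable 0 1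
  have hdot : ∑ j, (Yh - Y) j * g j = (Yh - Y) ⬝ᵥ g := rfl
  have hskew : (Yh - Y) ⬝ᵥ g = 0 := by
    rw [hstep]
    have : (τ • J.mulVec g) ⬝ᵥ g = τ * (J.mulVec g ⬝ᵥ g) := by
      simp [smul_dotProduct]
    rw [show (τ • J.mulVec (fun j => ∫ θ in (0:ℝ)..1,
        fderiv ℝ H (θ • Yh + (1 - θ) • Y) (Pi.single j 1))) = τ • J.mulVec g from rfl, this]
    have h0 : J.mulVec g ⬝ᵥ g = 0 := by
      have h1 : J.mulVec g ⬝ᵥ g = g ⬝ᵥ J.mulVec g := dotProduct_comm _ _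
      have h2 : g ⬝ᵥ J.mulVec g = (J.transpose.mulVec g) ⬝ᵥ g := by
        rw [Matrix.dotProduct_mulVec, ← Matrix.mulVec_transpose]
      rw [hJ] at h2
      have : J.mulVec g ⬝ᵥ g = -(J.mulVec g ⬝ᵥ g) := by
        have h3 := h1.trans h2
        rwa [Matrix.neg_mulVec, neg_dotProduct] at h3
      linarith
    rw [h0, mul_zero]
  have : H (γ 1) - H (γ 0) = 0 := by rw [hftc, hint, hdot, hskew]
  have hγ1 : γ 1 = Yh := by simp [hγdef]
  have hγ0 : γ 0 = Y := by simp [hγdef]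
  rw [hγ1, hγ0] at this
  linarith
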